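/- Consider the online pricing model with η-pessimistic buyers, where the seller runs the two-phase pricing algorithm with parameter λ ∈ (0,1], and suppose q_min ≤ 2λ. Let E_2 be the event that for every round t > t_λ and every active type i ∈ S_t with q_i ≥ λ/2, the number of reviews left by type-i buyers before round t is at least (1/4)·λ·(t−1). Then Pr(E_2^c) ≤ 1/T. -/

import Mathlib

open MeasureTheory ProbabilityTheory Finset
open scoped ENNReal Classical

/-- The online pricing model with `d` buyer types and `T` rounds (rounds are indexed
`1, …, T`).  Types arrive i.i.d. from the distribution `q` on `Fin d`; type `i` has
ex-ante value `θ i` and ex-post value distribution `D i` supported on `[0,1]` with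
mean `θ i`.  The ex-post values are pre-generated: the buyer of round `s`, if of type
`i` and purchasing, reports the review `vdraw s i`.  The seller posts the price
`price t` on round `t`, the buyer of round `t` uses the threshold `tau t` and buys
iff `price t ≤ tau t` (field `buy`, constrained by `BuyerRule` below). -/
structure PricingModel (Ω : Type) [MeasurableSpace Ω] where
  d : ℕ
  T : ℕ
  hd : 1 ≤ d
  hT : 1 ≤ T
  η : ℝ
  hη : η ∈ Set.Ioo (0:ℝ) 1
  lam : ℝ
  hlam : lam ∈ Set.Ioc (0:ℝ) 1
  q : Fin d → ℝ
  hq_nonneg : ∀ i, 0 ≤ q i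
  hq_sum : ∑ i, q i = 1
  θ : Fin d → ℝ
  hθ_mem : ∀ i, θ i ∈ Set.Icc (0:ℝ) 1
  hθ_mono : Monotone θ
  Pr : Measure Ω
  hPr : IsProbabilityMeasure Pr
  D : Fin d → Measure ℝ
  hD_prob : ∀ i, IsProbabilityMeasure (D i)
  hD_supp : ∀ i, (D i) (Set.Icc (0:ℝ) 1) = 1
  hD_mean : ∀ i, (∫ x, x ∂(D i)) = θ i
  itype : ℕ → Ω → Fin d
  vdraw : ℕ → Fin d → Ω → ℝ
  h_itype_meas : ∀ s, Measurable (itype s)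
  h_vdraw_meas : ∀ s i, Measurable (vdraw s i)
  h_itype_law : ∀ s i, Pr {ω | itype s ω = i} = ENNReal.ofReal (q i)
  h_vdraw_law : ∀ s i, Measure.map (vdraw s i) Pr = D i
  h_indep : iIndepFun
      (fun s ω => (itype s ω, fun i => vdraw s i ω)) Pr
  h_indep_within : ∀ s, IndepFun (itype s) (fun ω i => vdraw s i ω) Pr
  price : ℕ → Ω → ℝ
  tau : ℕ → Ω → ℝ
  buy : ℕ → Ω → Bool
  pstar : ℝ
  hpstar_mem : pstar ∈ Set.Icc (0:ℝ) 1
  hpstar_opt : ∀ p ∈ Set.Icc (0:ℝ) 1,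
      p * (∑ i, if p ≤ θ i then q i else 0) ≤ pstar * (∑ i, if pstar ≤ θ i then q i else 0)

namespace PricingModel

variable {Ω : Type} [MeasurableSpace Ω] (M : PricingModel Ω)

/-- The review left on round `s` (relevant only if a purchase occurred). -/
noncomputable def review (s : ℕ) (ω : Ω) : ℝ := M.vdraw s (M.itype s ω) ω

/-- Rounds before round `t` on which a buyer of type `i` purchased (and hence reviewed). -/
noncomputable def Phi (i : Fin M.d) (t : ℕ) (ω : Ω) : Finset ℕ :=
  (Finset.Ico 1 t).filter (fun s => M.buy s ω = true ∧ M.itype s ω = i)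

/-- Number of reviews by buyers of type `i` before round `t`. -/
noncomputable def nPhi (i : Fin M.d) (t : ℕ) (ω : Ω) : ℕ := (M.Phi i t ω).card

/-- Sum of the reviews left by buyers of type `i` before round `t`. -/
noncomputable def phiSum (i : Fin M.d) (t : ℕ) (ω : Ω) : ℝ :=
  ∑ s ∈ M.Phi i t ω, M.review s ω

/-- The lower confidence bound `LB_t` available to the round-`t` buyer. -/
noncomputable def LBt (t : ℕ) (ω : Ω) : ℝ :=
  if M.nPhi (M.itype t ω) t ω = 0 then 0
  else max 0 (M.phiSum (M.itype t ω) t ω / (M.nPhi (M.itype t ω) t ω)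
      - Real.sqrt (Real.log ((t : ℝ) / M.η) / (2 * (M.nPhi (M.itype t ω) t ω))))

/-- The seller's lower confidence bound `LB_{i,t}` on the value of type `i` at round `t`. -/
noncomputable def LBi (i : Fin M.d) (t : ℕ) (ω : Ω) : ℝ :=
  if M.nPhi i t ω = 0 then 0
  else max 0 (M.phiSum i t ω / (M.nPhi i t ω)
      - Real.sqrt (Real.log ((M.T : ℝ) / M.η) / (2 * (M.nPhi i t ω))))

/-- Length of Phase 1: `t_λ = 32 ln(d T²)/λ + 1` (rounded). -/
noncomputable def tlam : ℕ := ⌈32 * Real.log ((M.d : ℝ) * (M.T : ℝ) ^ 2) / M.lam⌉₊ + 1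

/-- Empirical frequency of type `i` during Phase 1. -/
noncomputable def qbar (i : Fin M.d) (ω : Ω) : ℝ :=
  (((Finset.Icc 1 M.tlam).filter (fun s => M.itype s ω = i)).card : ℝ) / M.tlam

/-- The set `Q` of types appearing on at least a `(3λ/4)`-fraction of Phase-1 rounds. -/
noncomputable def Qset (ω : Ω) : Finset (Fin M.d) :=
  Finset.univ.filter (fun i => 3 * M.lam / 4 ≤ M.qbar i ω)

/-- The confidence radius `ρ_t = sqrt(ln(d T²)/(2(t − t_λ)))`. -/
noncomputable def rho (t : ℕ) : ℝ :=
  Real.sqrt (Real.log ((M.d : ℝ) * (M.T : ℝ) ^ 2) / (2 * ((t : ℝ) - (M.tlam : ℝ))))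

/-- `ρ` with the convention `ρ_{t_λ} = 1`. -/
noncomputable def rho' (t : ℕ) : ℝ := if t = M.tlam then 1 else M.rho t

/-- The revenue estimate `μ̄_{i,t}`. -/
noncomputable def mubar (i : Fin M.d) (t : ℕ) (ω : Ω) : ℝ :=
  (∑ s ∈ Finset.Icc (M.tlam + 1) t,
      if M.buy s ω = true ∧ M.θ i ≤ M.θ (M.itype s ω) ∧ M.itype s ω ∈ M.Qset ω
      then M.θ i else 0) / ((t : ℝ) - (M.tlam : ℝ))

/-- Upper confidence bound `μ̂_{i,t}`. -/
noncomputable def muhat (i : Fin M.d) (t : ℕ) (ω : Ω) : ℝ := M.mubar i t ω + M.rho t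

/-- Lower confidence bound `μ̌_{i,t}`. -/
noncomputable def mucheck (i : Fin M.d) (t : ℕ) (ω : Ω) : ℝ := M.mubar i t ω - M.rho t

/-- `rev(p, Q) = p ⋅ Pr_{j∼P}[θ_j ≥ p and j ∈ Q]` (for the realized random set `Q`). -/
noncomputable def revQ (p : ℝ) (ω : Ω) : ℝ :=
  p * ∑ j, if p ≤ M.θ j ∧ j ∈ M.Qset ω then M.q j else 0

/-- The seller's realized revenue over the `T` rounds. -/
noncomputable def revenue (ω : Ω) : ℝ :=
  ∑ t ∈ Finset.Icc 1 M.T, M.price t ω * (if M.buy t ω then 1 else 0)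

/-- Expected regret: `T⋅p*⋅Pr[θ_i ≥ p*] − E[Σ_t p_t b_t]`. -/
noncomputable def regret : ℝ :=
  (M.T : ℝ) * (M.pstar * ∑ i, if M.pstar ≤ M.θ i then M.q i else 0)
    - ∫ ω, M.revenue ω ∂M.Pr

/-- The smallest appearance probability of any type. -/
noncomputable def qmin : ℝ := ⨅ i, M.q i

/-- σ-algebra of the history before round `t` (all types and potential reviews of
rounds `< t`). -/
noncomputable def histMS (t : ℕ) : MeasurableSpace Ω :=
  MeasurableSpace.comap
    (fun ω => fun s : Fin t => (M.itype (s : ℕ) ω, fun i => M.vdraw (s : ℕ) i ω))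
    inferInstance

/-- Buyers purchase iff the price is at most their threshold. -/
def BuyerRule : Prop := ∀ t ω, (M.buy t ω = true ↔ M.price t ω ≤ M.tau t ω)

/-- η-pessimism: the buyer's threshold is at least the lower confidence bound `LB_t`. -/
def Pessimistic : Prop := ∀ t ω, 1 ≤ t → t ≤ M.T → M.LBt t ω ≤ M.tau t ω

/-- The buyer's threshold is a function of the history (in particular of the past
reviews) and of the buyer's own type. -/
def TauAdapted : Prop :=
  ∀ t, Measurable[M.histMS t ⊔ MeasurableSpace.comap (M.itype t) inferInstance] (M.tau t)

/-- The seller's price is a measurable function of the observable history. -/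
def PriceAdapted : Prop := ∀ t, Measurable[M.histMS t] (M.price t)

end PricingModel

/-- A run of the two-phase pricing algorithm: Phase 1 (rounds `1,…,t_λ`) gives the item
for free; `S` is the successively refined active set of Phase 2, initialized at `Q`,
during which the price is `min_{i ∈ S_t} min(θ_i, LB_{i,t})` and types whose revenue
upper confidence bound falls below the best lower confidence bound are eliminated. -/
structure Algorithm {Ω : Type} [MeasurableSpace Ω] (M : PricingModel Ω) where
  S : ℕ → Ω → Finset (Fin M.d)
  h_phase1_price : ∀ t ω, t ≤ M.tlam → M.price t ω = 0
  h_phase1_buy : ∀ t ω, 1 ≤ t → t ≤ M.tlam → M.buy t ω = true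
  h_S_init : ∀ ω, S (M.tlam + 1) ω = M.Qset ω
  h_price2 : ∀ t ω, M.tlam < t →
      M.price t ω =
        if h : (S t ω).Nonempty then (S t ω).inf' h (fun i => min (M.θ i) (M.LBi i t ω))
        else 0
  h_S_step : ∀ t ω, M.tlam < t →
      S (t + 1) ω = (S t ω).filter
        (fun i => ∃ j ∈ S t ω, j ≤ i ∧ ∀ k ∈ S t ω, M.mucheck k t ω ≤ M.muhat j t ω)


section AuxProofs

open Real

variable {Ω : Type} [MeasurableSpace Ω] (M : PricingModel Ω) (A : Algorithm M)

/-- The active set is decreasing during Phase 2. -/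
lemma aux_S_anti (ω : Ω) {s t : ℕ} (hs : M.tlam < s) (hst : s ≤ t) :
    A.S t ω ⊆ A.S s ω := by
  induction t, hst using Nat.le_induction with
  | base => exact subset_rfl
  | succ n hn ih =>
      rw [A.h_S_step n ω (lt_of_lt_of_le hs hn)]
      exact (Finset.filter_subset _ _).trans ih

/-- A buyer whose type is active purchases. -/
lemma aux_buy (hpess : M.Pessimistic) (hbr : M.BuyerRule) (ω : Ω) {s : ℕ}
    (hs : M.tlam < s) (hsT : s ≤ M.T) {i : Fin M.d} (hi : i ∈ A.S s ω)
    (hty : M.itype s ω = i) : M.buy s ω = true := by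
  have hne : (A.S s ω).Nonempty := ⟨i, hi⟩
  have hprice : M.price s ω ≤ M.LBi i s ω := by
    rw [A.h_price2 s ω hs, dif_pos hne]
    exact (Finset.inf'_le _ hi).trans (min_le_right _ _)
  have hLB : M.LBi i s ω ≤ M.LBt s ω := by
    unfold PricingModel.LBi PricingModel.LBt
    rw [hty]
    by_cases h0 : M.nPhi i s ω = 0
    · simp [h0]
    · rw [if_neg h0, if_neg h0]
      refine max_le_max le_rfl (sub_le_sub_left (Real.sqrt_le_sqrt ?_) _)
      have hn : (0:ℝ) < 2 * (M.nPhi i s ω : ℝ) := by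
        have := Nat.pos_of_ne_zero h0
        have : (0:ℝ) < (M.nPhi i s ω : ℝ) := by exact_mod_cast this
        linarith
      apply (div_le_div_iff_of_pos_right hn).mpr
      have hη := M.hη.1
      have hs1 : (1:ℝ) ≤ (s:ℝ) := by
        have : 1 ≤ s := by
          have : 1 ≤ M.tlam := Nat.le_add_left 1 _
          omega
        exact_mod_cast this
      have hsT' : (s:ℝ) ≤ (M.T:ℝ) := by exact_mod_cast hsT
      apply Real.log_le_log (by positivity)
      exact (div_le_div_iff_of_pos_right hη).mpr hsT'
  have htau := hpess s ω (by have : 1 ≤ M.tlam := Nat.le_add_left 1 _; omega) hsT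
  exact (hbr s ω).mpr (hprice.trans (hLB.trans htau))

/-- For an active type, the number of reviews equals the number of arrivals. -/
lemma aux_count (hpess : M.Pessimistic) (hbr : M.BuyerRule) (ω : Ω) {t : ℕ}
    (ht : M.tlam < t) (htT : t ≤ M.T) {i : Fin M.d} (hi : i ∈ A.S t ω) :
    M.nPhi i t ω = ((Finset.Ico 1 t).filter (fun s => M.itype s ω = i)).card := by
  unfold PricingModel.nPhi PricingModel.Phi
  congr 1
  ext s
  simp only [Finset.mem_filter, Finset.mem_Ico]
  constructor
  · rintro ⟨hm, -, h2⟩; exact ⟨hm, h2⟩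
  · rintro ⟨⟨hm1, hm2⟩, h2⟩
    refine ⟨⟨hm1, hm2⟩, ?_, h2⟩
    by_cases hsl : s ≤ M.tlam
    · exact A.h_phase1_buy s ω hm1 hsl
    · exact aux_buy M A hpess hbr ω (not_le.mp hsl) (by omega)
        (aux_S_anti M A ω (not_le.mp hsl) (le_of_lt hm2) hi) h2

/-- Chernoff bound for the number of type-`i` arrivals. -/
lemma aux_chernoff {i : Fin M.d} (hqi : M.lam / 2 ≤ M.q i)
    {t : ℕ} (ht : M.tlam < t) :
    M.Pr {ω | ((((Finset.Ico 1 t).filter (fun s => M.itype s ω = i)).card : ℝ))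
        < (1/4) * M.lam * ((t:ℝ) - 1)}
      ≤ ENNReal.ofReal (Real.exp (-2 * Real.log ((M.d:ℝ) * (M.T:ℝ)^2))) := by
  haveI := M.hPr
  classical
  set L := Real.log ((M.d:ℝ) * (M.T:ℝ)^2) with hLdef
  set u := -Real.log 2 with hudef
  have hu : u ≤ 0 := neg_nonpos.mpr (Real.log_nonneg one_le_two)
  set Y : ℕ → Ω → ℝ := fun s =>
    (fun p : Fin M.d × (Fin M.d → ℝ) => if p.1 = i then (1:ℝ) else 0) ∘
      (fun ω => (M.itype s ω, fun j => M.vdraw s j ω)) with hYdef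
  have hYval : ∀ s ω, Y s ω = if M.itype s ω = i then 1 else 0 := fun s ω => rfl
  have hgmeas : Measurable (fun p : Fin M.d × (Fin M.d → ℝ) => if p.1 = i then (1:ℝ) else 0) := by
    refine Measurable.ite ?_ measurable_const measurable_const
    exact measurable_fst (measurableSet_singleton i)
  have hYmeas : ∀ s, Measurable (Y s) := by
    intro s
    exact hgmeas.comp ((M.h_itype_meas s).prodMk
      (measurable_pi_lambda _ fun j => M.h_vdraw_meas s j))
  have hind : ProbabilityTheory.iIndepFun
      Y M.Pr := M.h_indep.comp _ (fun _ => hgmeas)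
  set X : Ω → ℝ := fun ω => ∑ s ∈ Finset.Ico 1 t, Y s ω with hXdef
  have hXeq : (∑ s ∈ Finset.Ico 1 t, Y s) = X := by
    funext ω
    rw [Finset.sum_apply]
  have hXmeas : Measurable X := Finset.measurable_sum _ fun s _ => hYmeas s
  have hXnonneg : ∀ ω, 0 ≤ X ω := by
    intro ω
    refine Finset.sum_nonneg fun s _ => ?_
    rw [hYval]; split <;> norm_num
  have hint : MeasureTheory.Integrable (fun ω => Real.exp (u * X ω)) M.Pr := by
    refine MeasureTheory.Integrable.mono' (MeasureTheory.integrable_const 1)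
      ((hXmeas.const_mul u).exp.aestronglyMeasurable) ?_
    filter_upwards with ω
    rw [Real.norm_eq_abs, abs_of_pos (Real.exp_pos _)]
    exact Real.exp_le_one_iff.mpr (mul_nonpos_of_nonpos_of_nonneg hu (hXnonneg ω))
  set ε := (1/4) * M.lam * ((t:ℝ) - 1) with hεdef
  have hXcard : ∀ ω, X ω = ((((Finset.Ico 1 t).filter (fun s => M.itype s ω = i)).card : ℝ)) := by
    intro ω
    rw [Finset.card_filter]
    push_cast
    refine Finset.sum_congr rfl fun s _ => ?_
    rw [hYval]
  have hsub : {ω | ((((Finset.Ico 1 t).filter (fun s => M.itype s ω = i)).card : ℝ)) < ε}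
      ⊆ {ω | X ω ≤ ε} := by
    intro ω hω
    simp only [Set.mem_setOf_eq] at hω ⊢
    rw [hXcard ω]
    exact le_of_lt hω
  have hch := ProbabilityTheory.measure_le_le_exp_mul_mgf (μ := M.Pr) (X := X) ε hu hint
  -- mgf of each Y s
  have hmgf : ∀ s : ℕ, ProbabilityTheory.mgf (Y s) M.Pr u = 1 + M.q i * (Real.exp u - 1) := by
    intro s
    have hA : MeasurableSet {ω | M.itype s ω = i} :=
      (M.h_itype_meas s) (measurableSet_singleton i)
    have hfun : (fun ω => Real.exp (u * Y s ω)) =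
        fun ω => Set.indicator {ω | M.itype s ω = i} (fun _ => Real.exp u - 1) ω + 1 := by
      funext ω
      rw [hYval]
      by_cases h : M.itype s ω = i
      · rw [if_pos h, Set.indicator_of_mem (show ω ∈ {ω | M.itype s ω = i} from h)]
        simp
      · rw [if_neg h, Set.indicator_of_notMem (show ω ∉ {ω | M.itype s ω = i} from h)]
        simp
    rw [ProbabilityTheory.mgf, hfun,
      MeasureTheory.integral_add ((MeasureTheory.integrable_const _).indicator hA)
        (MeasureTheory.integrable_const 1),
      MeasureTheory.integral_indicator_const _ hA, MeasureTheory.integral_const]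
    rw [MeasureTheory.measureReal_def, M.h_itype_law s i, ENNReal.toReal_ofReal (M.hq_nonneg i)]
    simp [smul_eq_mul]
    ring
  have hq1 : M.q i ≤ 1 := by
    have := Finset.single_le_sum (f := M.q) (fun j _ => M.hq_nonneg j) (Finset.mem_univ i)
    rw [M.hq_sum] at this
    exact this
  have hexpu : Real.exp u = 2⁻¹ := by
    rw [hudef, Real.exp_neg, Real.exp_log two_pos]
  set n := t - 1 with hn
  have hcardIco : (Finset.Ico 1 t).card = n := by rw [Nat.card_Ico]
  have hmgfX : ProbabilityTheory.mgf X M.Pr u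
      = ∏ s ∈ Finset.Ico 1 t, ProbabilityTheory.mgf (Y s) M.Pr u := by
    rw [← hXeq]
    exact hind.mgf_sum hYmeas _
  have hprod : ProbabilityTheory.mgf X M.Pr u ≤ Real.exp (-((n:ℝ) * (M.q i / 2))) := by
    rw [hmgfX]
    calc ∏ s ∈ Finset.Ico 1 t, ProbabilityTheory.mgf (Y s) M.Pr u
        ≤ ∏ _s ∈ Finset.Ico 1 t, Real.exp (-(M.q i / 2)) := by
          refine Finset.prod_le_prod (fun s _ => ?_) (fun s _ => ?_)
          · rw [hmgf s, hexpu]; nlinarith [M.hq_nonneg i]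
          · rw [hmgf s, hexpu]
            have := Real.add_one_le_exp (-(M.q i / 2))
            linarith
      _ = Real.exp (-(M.q i / 2)) ^ n := by rw [Finset.prod_const, hcardIco]
      _ = Real.exp (-((n:ℝ) * (M.q i / 2))) := by
          rw [← Real.exp_nat_mul]; ring_nf
  -- the exponent bound
  have hlam := M.hlam.1
  have hL0 : 0 ≤ L := by
    apply Real.log_nonneg
    have hd1 : (1:ℝ) ≤ (M.d : ℝ) := by exact_mod_cast M.hd
    have hT1 : (1:ℝ) ≤ (M.T : ℝ) := by exact_mod_cast M.hT
    nlinarith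
  have htl : 32 * L / M.lam ≤ (M.tlam : ℝ) := by
    rw [PricingModel.tlam]
    push_cast
    have := Nat.le_ceil (32 * L / M.lam)
    linarith
  have hnt : ((t:ℝ) - 1) = (n:ℝ) := by
    have h1t : 1 ≤ t := by have : 1 ≤ M.tlam := Nat.le_add_left 1 _; omega
    rw [hn]
    push_cast [h1t]
    ring
  have hntl : (M.tlam : ℝ) ≤ (n:ℝ) := by
    have : M.tlam ≤ n := by omega
    exact_mod_cast this
  have h32 : 32 * L ≤ M.lam * (n:ℝ) := by
    rw [div_le_iff₀ hlam] at htl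
    nlinarith
  have hln0 : 0 ≤ M.lam * (n:ℝ) := by linarith
  have hexpbound : Real.exp (-u * ε) * ProbabilityTheory.mgf X M.Pr u ≤ Real.exp (-2 * L) := by
    calc Real.exp (-u * ε) * ProbabilityTheory.mgf X M.Pr u
        ≤ Real.exp (-u * ε) * Real.exp (-((n:ℝ) * (M.q i / 2))) := by
          exact mul_le_mul_of_nonneg_left hprod (le_of_lt (Real.exp_pos _))
      _ = Real.exp (-u * ε + -((n:ℝ) * (M.q i / 2))) := (Real.exp_add _ _).symm
      _ ≤ Real.exp (-2 * L) := by
          apply Real.exp_le_exp.mpr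
          rw [hεdef, hudef, hnt, neg_neg]
          have hnq : (n:ℝ) * (M.lam / 2) ≤ (n:ℝ) * M.q i :=
            mul_le_mul_of_nonneg_left hqi (Nat.cast_nonneg n)
          have hlog2 : Real.log 2 < 0.6931471808 := Real.log_two_lt_d9
          have h1 : Real.log 2 * (M.lam * (n:ℝ)) ≤ 0.6931471808 * (M.lam * (n:ℝ)) :=
            mul_le_mul_of_nonneg_right hlog2.le hln0
          nlinarith
  -- put together
  calc M.Pr {ω | ((((Finset.Ico 1 t).filter (fun s => M.itype s ω = i)).card : ℝ)) < ε}
      ≤ M.Pr {ω | X ω ≤ ε} := MeasureTheory.measure_mono hsub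
    _ = ENNReal.ofReal ((M.Pr {ω | X ω ≤ ε}).toReal) :=
        (ENNReal.ofReal_toReal (MeasureTheory.measure_ne_top _ _)).symm
    _ ≤ ENNReal.ofReal (Real.exp (-u * ε) * ProbabilityTheory.mgf X M.Pr u) :=
        ENNReal.ofReal_le_ofReal hch
    _ ≤ ENNReal.ofReal (Real.exp (-2 * L)) := ENNReal.ofReal_le_ofReal hexpbound

end AuxProofs

/-- if `q_min ≤ 2λ`, then except with probability `1/T`, every active
type `i ∈ S_t` with `q_i ≥ λ/2` of every Phase-2 round `t` has at least
`(1/4) λ (t−1)` reviews. -/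
theorem lemma_many_reviews_small_qmin :
    ∀ (Ω : Type) [MeasurableSpace Ω] (M : PricingModel Ω) (A : Algorithm M),
      M.Pessimistic → M.BuyerRule → M.TauAdapted →
      M.qmin ≤ 2 * M.lam →
      M.Pr {ω | ¬ ∀ t, M.tlam < t → t ≤ M.T → ∀ i ∈ A.S t ω, M.lam / 2 ≤ M.q i →
          (1 / 4) * M.lam * ((t : ℝ) - 1) ≤ (M.nPhi i t ω : ℝ)}
        ≤ 1 / (M.T : ℝ≥0∞) := by
  intro Ω _ M A hpess hbr _ _
  haveI := M.hPr
  classical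
  set L := Real.log ((M.d:ℝ) * (M.T:ℝ)^2) with hLdef
  set B := ENNReal.ofReal (Real.exp (-2 * L)) with hBdef
  set I := Finset.Icc (M.tlam + 1) M.T with hIdef
  set J := Finset.univ.filter (fun i : Fin M.d => M.lam / 2 ≤ M.q i) with hJdef
  set Bad : ℕ → Fin M.d → Set Ω := fun t i =>
    {ω | ((((Finset.Ico 1 t).filter (fun s => M.itype s ω = i)).card : ℝ))
      < (1/4) * M.lam * ((t:ℝ) - 1)} with hBaddef
  have hsub : {ω | ¬ ∀ t, M.tlam < t → t ≤ M.T → ∀ i ∈ A.S t ω, M.lam / 2 ≤ M.q i →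
      (1 / 4) * M.lam * ((t : ℝ) - 1) ≤ (M.nPhi i t ω : ℝ)}
      ⊆ ⋃ t ∈ I, ⋃ i ∈ J, Bad t i := by
    intro ω hω
    simp only [Set.mem_setOf_eq] at hω
    push_neg at hω
    obtain ⟨t, ht1, ht2, i, hiS, hqi, hlt⟩ := hω
    rw [aux_count M A hpess hbr ω ht1 ht2 hiS] at hlt
    have htI : t ∈ I := by rw [hIdef, Finset.mem_Icc]; omega
    have hiJ : i ∈ J := by rw [hJdef]; simp [hqi]
    exact Set.mem_iUnion₂.mpr ⟨t, htI, Set.mem_iUnion₂.mpr ⟨i, hiJ, hlt⟩⟩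
  have hcardI : I.card ≤ M.T := by rw [hIdef, Nat.card_Icc]; omega
  have hcardJ : J.card ≤ M.d := by
    rw [hJdef]
    exact (Finset.card_filter_le _ _).trans (by simp)
  calc M.Pr {ω | ¬ ∀ t, M.tlam < t → t ≤ M.T → ∀ i ∈ A.S t ω, M.lam / 2 ≤ M.q i →
        (1 / 4) * M.lam * ((t : ℝ) - 1) ≤ (M.nPhi i t ω : ℝ)}
      ≤ ∑ t ∈ I, ∑ i ∈ J, M.Pr (Bad t i) := by
        refine (MeasureTheory.measure_mono hsub).trans ?_
        refine (measure_biUnion_finset_le I _).trans ?_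
        exact Finset.sum_le_sum fun t _ => measure_biUnion_finset_le J _
    _ ≤ ∑ _t ∈ I, ∑ _i ∈ J, B := by
        refine Finset.sum_le_sum fun t htI => Finset.sum_le_sum fun i hiJ => ?_
        have hqi : M.lam / 2 ≤ M.q i := by
          rw [hJdef] at hiJ
          simpa using hiJ
        have ht : M.tlam < t := by
          rw [hIdef, Finset.mem_Icc] at htI
          omega
        exact aux_chernoff M hqi ht
    _ = (I.card : ℝ≥0∞) * ((J.card : ℝ≥0∞) * B) := by
        simp [Finset.sum_const, nsmul_eq_mul, mul_assoc]
    _ ≤ (M.T : ℝ≥0∞) * ((M.d : ℝ≥0∞) * B) := by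
        exact mul_le_mul' (by exact_mod_cast hcardI)
          (mul_le_mul' (by exact_mod_cast hcardJ) le_rfl)
    _ ≤ 1 / (M.T : ℝ≥0∞) := by
        have hd1 : (1:ℝ) ≤ (M.d : ℝ) := by exact_mod_cast M.hd
        have hT1 : (1:ℝ) ≤ (M.T : ℝ) := by exact_mod_cast M.hT
        have hdT : (0:ℝ) < (M.d:ℝ) * (M.T:ℝ)^2 := by nlinarith
        have hexp : Real.exp (-2 * L)
            = (((M.d:ℝ) * (M.T:ℝ)^2)⁻¹) * (((M.d:ℝ) * (M.T:ℝ)^2)⁻¹) := by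
          rw [show (-2:ℝ) * L = (-L) + (-L) by ring, Real.exp_add, hLdef, Real.exp_neg,
            Real.exp_log hdT]
        have h1 : (M.T : ℝ≥0∞) * ((M.d : ℝ≥0∞) * B)
            = ENNReal.ofReal ((M.T:ℝ) * ((M.d:ℝ) * Real.exp (-2 * L))) := by
          rw [hBdef, ENNReal.ofReal_mul (by positivity : (0:ℝ) ≤ (M.T:ℝ)),
            ENNReal.ofReal_mul (by positivity : (0:ℝ) ≤ (M.d:ℝ))]
          simp [ENNReal.ofReal_natCast]
        rw [h1, one_div, show ((M.T : ℝ≥0∞)) = ENNReal.ofReal ((M.T:ℝ)) by simp,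
          ← ENNReal.ofReal_inv_of_pos (by linarith)]
        apply ENNReal.ofReal_le_ofReal
        rw [hexp]
        have key : (M.T:ℝ) * ((M.d:ℝ) *
            ((((M.d:ℝ) * (M.T:ℝ)^2)⁻¹) * (((M.d:ℝ) * (M.T:ℝ)^2)⁻¹)))
            = ((M.d:ℝ) * (M.T:ℝ)^3)⁻¹ := by
          field_simp
        rw [key]
        have hT3 : (M.T:ℝ) ≤ (M.T:ℝ)^3 := by nlinarith
        apply inv_anti₀ (by linarith)
        nlinarith
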